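/- arXiv:2304.07427 — 6 statements merged into one kernel-verified Lean document; each statement's English description precedes it below -/
import Mathlib

section
/- If A ≻_i B, B ≻_j C, and C ≻_k A for triples of reals A, B, C, then the indices i, j, k are pairwise distinct, i.e., {i,j,k} = {1,2,3}. -/
/-- The `k`-th face value of a 3-sided die `X = (x1, x2, x3)`, for `k ∈ {1,2,3}`. -/
def coord (X : ℝ × ℝ × ℝ) (k : ℕ) : ℝ :=
  if k = 1 then X.1 else if k = 2 then X.2.1 else X.2.2

/-- The sum of the face values of a die. -/
def diceSum (X : ℝ × ℝ × ℝ) : ℝ := X.1 + X.2.1 + X.2.2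

/-- `Dom k X Y` is the relation `X ≻ₖ Y`: `xₘ > yₘ` for both indices `m ≠ k`
in `{1,2,3}`, and `x_k < y_k`. -/
def Dom (k : ℕ) (X Y : ℝ × ℝ × ℝ) : Prop :=
  coord X k < coord Y k ∧ ∀ m ∈ ({1, 2, 3} : Set ℕ), m ≠ k → coord X m > coord Y m

theorem intransitive_triple_distinct_indices
    (A B C : ℝ × ℝ × ℝ) (i j k : ℕ)
    (hi : i ∈ ({1, 2, 3} : Set ℕ)) (hj : j ∈ ({1, 2, 3} : Set ℕ))
    (hk : k ∈ ({1, 2, 3} : Set ℕ))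
    (hAB : Dom i A B) (hBC : Dom j B C) (hCA : Dom k C A) :
    i ≠ j ∧ j ≠ k ∧ i ≠ k ∧ ({i, j, k} : Set ℕ) = ({1, 2, 3} : Set ℕ) := by
  simp only [Set.mem_insert_iff, Set.mem_singleton_iff] at hi hj hk
  simp only [Dom, Set.mem_insert_iff, Set.mem_singleton_iff, forall_eq_or_imp, forall_eq,
    coord] at hAB hBC hCA
  rcases hi with rfl | rfl | rfl <;> rcases hj with rfl | rfl | rfl <;>
    rcases hk with rfl | rfl | rfl <;> norm_num at hAB hBC hCA <;>
    first
    | (exfalso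
       obtain ⟨a1, a2, a3⟩ := hAB
       obtain ⟨b1, b2, b3⟩ := hBC
       obtain ⟨c1, c2, c3⟩ := hCA
       linarith)
    | (refine ⟨by norm_num, by norm_num, by norm_num, ?_⟩
       ext x
       simp only [Set.mem_insert_iff, Set.mem_singleton_iff]
       try tauto)
end

section
/- There do not exist triples of reals A, B, C, D with A ≻_i B ≻_i C ≻_j D ≻_j A for any i, j ∈ {1,2,3}. -/
theorem no_four_cycle_pattern_iijj :
    ¬ ∃ (A B C D : ℝ × ℝ × ℝ) (i j : ℕ),
      i ∈ ({1, 2, 3} : Set ℕ) ∧ j ∈ ({1, 2, 3} : Set ℕ) ∧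
      Dom i A B ∧ Dom i B C ∧ Dom j C D ∧ Dom j D A := by
  rintro ⟨A, B, C, D, i, j, hi, hj, ⟨_, hAB⟩, ⟨_, hBC⟩, ⟨_, hCD⟩, ⟨_, hDA⟩⟩
  obtain ⟨m, hm, hmi, hmj⟩ : ∃ m ∈ ({1, 2, 3} : Set ℕ), m ≠ i ∧ m ≠ j := by
    simp only [Set.mem_insert_iff, Set.mem_singleton_iff] at hi hj ⊢
    rcases hi with rfl | rfl | rfl <;> rcases hj with rfl | rfl | rfl <;> first | (refine ⟨1, ?_⟩; decide) | (refine ⟨2, ?_⟩; decide) | (refine ⟨3, ?_⟩; decide)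
  have h1 := hAB m hm hmi
  have h2 := hBC m hm hmi
  have h3 := hCD m hm hmj
  have h4 := hDA m hm hmj
  linarith
end

section
/- There do not exist triples of reals A, B, C, D and distinct indices i, j ∈ {1,2,3} with A ≻_i B ≻_j C ≻_i D ≻_j A. -/
lemma dom_chain_false {i j : ℕ} {A B C D : ℝ × ℝ × ℝ}
    (h1 : Dom i A B) (h2 : Dom j B C) (h3 : Dom i C D) (h4 : Dom j D A)
    (k : ℕ) (hk : k ∈ ({1, 2, 3} : Set ℕ)) (hki : k ≠ i) (hkj : k ≠ j) : False := by
  linarith [h1.2 k hk hki, h2.2 k hk hkj, h3.2 k hk hki, h4.2 k hk hkj]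

theorem no_four_cycle_pattern_ijij :
    ¬ ∃ (A B C D : ℝ × ℝ × ℝ) (i j : ℕ),
      i ∈ ({1, 2, 3} : Set ℕ) ∧ j ∈ ({1, 2, 3} : Set ℕ) ∧ i ≠ j ∧
      Dom i A B ∧ Dom j B C ∧ Dom i C D ∧ Dom j D A := by
  rintro ⟨A, B, C, D, i, j, hi, hj, hij, h1, h2, h3, h4⟩
  simp only [Set.mem_insert_iff, Set.mem_singleton_iff] at hi hj
  rcases hi with rfl | rfl | rfl <;> rcases hj with rfl | rfl | rfl <;>
    first
    | exact hij rfl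
    | (apply dom_chain_false h1 h2 h3 h4 1 <;> (norm_num; done))
    | (apply dom_chain_false h1 h2 h3 h4 2 <;> (norm_num; done))
    | (apply dom_chain_false h1 h2 h3 h4 3 <;> (norm_num; done))
end

section
/- There do not exist triples of reals A, B, C, D with A ≻_1 B ≻_1 C ≻_1 D ≻_2 A. (If a1 < b1 < c1 < d1, d2 < a2... leads to contradiction since a2 > b2 > c2 > d2.) -/
theorem no_four_cycle_pattern_1112 :
    ¬ ∃ (A B C D : ℝ × ℝ × ℝ),
      Dom 1 A B ∧ Dom 1 B C ∧ Dom 1 C D ∧ Dom 2 D A := by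
  rintro ⟨A, B, C, D, ⟨_, hAB⟩, ⟨_, hBC⟩, ⟨_, hCD⟩, ⟨_, hDA⟩⟩
  have h3 : (3 : ℕ) ∈ ({1, 2, 3} : Set ℕ) := by simp
  have h1 := hAB 3 h3 (by norm_num)
  have h2 := hBC 3 h3 (by norm_num)
  have h3' := hCD 3 h3 (by norm_num)
  have h4 := hDA 3 h3 (by norm_num)
  linarith
end

section
/- For triples of reals A, B, C, D with all coordinate sums equal, if A ≻_i B, B ≻_j C, C ≻_k D, D ≻_l A hold, then the multiset {i,j,k,l} contains all three values 1, 2, 3 (i.e., at least three distinct values appear among i,j,k,l). -/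
theorem four_cycle_needs_three_indices
    (A B C D : ℝ × ℝ × ℝ)
    (hAB : diceSum A = diceSum B) (hBC : diceSum B = diceSum C)
    (hCD : diceSum C = diceSum D)
    (i j k l : ℕ)
    (hi : i ∈ ({1, 2, 3} : Set ℕ)) (hj : j ∈ ({1, 2, 3} : Set ℕ))
    (hk : k ∈ ({1, 2, 3} : Set ℕ)) (hl : l ∈ ({1, 2, 3} : Set ℕ))
    (h1 : Dom i A B) (h2 : Dom j B C) (h3 : Dom k C D) (h4 : Dom l D A) :
    ({i, j, k, l} : Set ℕ) = ({1, 2, 3} : Set ℕ) := by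
  apply Set.Subset.antisymm
  · intro v hv
    rcases hv with rfl | rfl | rfl | rfl
    · exact hi
    · exact hj
    · exact hk
    · exact hl
  · intro v hv
    by_contra hvn
    simp only [Set.mem_insert_iff, Set.mem_singleton_iff, not_or] at hvn
    obtain ⟨hvi, hvj, hvk, hvl⟩ := hvn
    have q1 := h1.2 v hv hvi
    have q2 := h2.2 v hv hvj
    have q3 := h3.2 v hv hvk
    have q4 := h4.2 v hv hvl
    linarith
end

section
/- The isometry of (ℝ³)⁴ given by (A,B,C,D) ↦ (A*, D*, C*, B*), where X* = (1−x3, 1−x2, 1−x1), maps the event {A ≻_1 B ≻_1 C ≻_2 D ≻_3 A} bijectively onto the event {A ≻_1 B ≻_2 C ≻_3 D ≻_3 A} (within the space of quadruples of dice with entries in [0,1] and each coordinate sum 3/2). -/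
/-- The star operator `X ↦ X* = (1 − x3, 1 − x2, 1 − x1)`. -/
def star3 (X : ℝ × ℝ × ℝ) : ℝ × ℝ × ℝ := (1 - X.2.2, 1 - X.2.1, 1 - X.1)

/-- `X` is a die: all faces in `[0,1]` and total `3/2`. -/
def IsDie (X : ℝ × ℝ × ℝ) : Prop :=
  X.1 ∈ Set.Icc (0 : ℝ) 1 ∧ X.2.1 ∈ Set.Icc (0 : ℝ) 1 ∧
    X.2.2 ∈ Set.Icc (0 : ℝ) 1 ∧ diceSum X = 3 / 2

/-- The map `(A,B,C,D) ↦ (A*, D*, C*, B*)`. -/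
def starMap (q : (ℝ × ℝ × ℝ) × (ℝ × ℝ × ℝ) × (ℝ × ℝ × ℝ) × (ℝ × ℝ × ℝ)) :
    (ℝ × ℝ × ℝ) × (ℝ × ℝ × ℝ) × (ℝ × ℝ × ℝ) × (ℝ × ℝ × ℝ) :=
  (star3 q.1, star3 q.2.2.2, star3 q.2.2.1, star3 q.2.1)

/-- The event `G₁₁₂₃`: `A ≻₁ B ≻₁ C ≻₂ D ≻₃ A` within the space of quadruples of dice. -/
def G1123 : Set ((ℝ × ℝ × ℝ) × (ℝ × ℝ × ℝ) × (ℝ × ℝ × ℝ) × (ℝ × ℝ × ℝ)) :=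
  {q | IsDie q.1 ∧ IsDie q.2.1 ∧ IsDie q.2.2.1 ∧ IsDie q.2.2.2 ∧
    Dom 1 q.1 q.2.1 ∧ Dom 1 q.2.1 q.2.2.1 ∧ Dom 2 q.2.2.1 q.2.2.2 ∧
    Dom 3 q.2.2.2 q.1}

/-- The event `G₁₂₃₃`: `A ≻₁ B ≻₂ C ≻₃ D ≻₃ A` within the space of quadruples of dice. -/
def G1233 : Set ((ℝ × ℝ × ℝ) × (ℝ × ℝ × ℝ) × (ℝ × ℝ × ℝ) × (ℝ × ℝ × ℝ)) :=
  {q | IsDie q.1 ∧ IsDie q.2.1 ∧ IsDie q.2.2.1 ∧ IsDie q.2.2.2 ∧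
    Dom 1 q.1 q.2.1 ∧ Dom 2 q.2.1 q.2.2.1 ∧ Dom 3 q.2.2.1 q.2.2.2 ∧
    Dom 3 q.2.2.2 q.1}

lemma dom_iff (k : ℕ) (X Y : ℝ × ℝ × ℝ) :
    Dom k X Y ↔ coord X k < coord Y k ∧
      ((1:ℕ) ≠ k → X.1 > Y.1) ∧ ((2:ℕ) ≠ k → X.2.1 > Y.2.1) ∧ ((3:ℕ) ≠ k → X.2.2 > Y.2.2) := by
  unfold Dom coord
  constructor
  · rintro ⟨h, h2⟩
    refine ⟨h, fun h1 => ?_, fun h1 => ?_, fun h1 => ?_⟩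
    · simpa using h2 1 (by simp) h1
    · simpa using h2 2 (by simp) h1
    · simpa using h2 3 (by simp) h1
  · rintro ⟨h, h1, h2, h3⟩
    refine ⟨h, fun m hm hmk => ?_⟩
    simp only [Set.mem_insert_iff, Set.mem_singleton_iff] at hm
    rcases hm with rfl | rfl | rfl
    · simpa using h1 hmk
    · simpa using h2 hmk
    · simpa using h3 hmk

lemma isDie_star3 {X : ℝ × ℝ × ℝ} (h : IsDie X) : IsDie (star3 X) := by
  obtain ⟨⟨a,b⟩,⟨c,d⟩,⟨e,f⟩,g⟩ := h
  unfold IsDie star3 diceSum at *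
  constructor
  · constructor <;> simp <;> linarith
  constructor
  · constructor <;> simp <;> linarith
  constructor
  · constructor <;> simp <;> linarith
  · simp; linarith

lemma star3_star3 (X : ℝ × ℝ × ℝ) : star3 (star3 X) = X := by
  simp [star3]

lemma dom_star1 {X Y : ℝ × ℝ × ℝ} (h : Dom 1 X Y) : Dom 3 (star3 Y) (star3 X) := by
  rw [dom_iff] at h ⊢
  obtain ⟨h, h1, h2, h3⟩ := h
  simp [coord, star3] at *
  exact ⟨by linarith, by linarith, by linarith⟩

lemma dom_star2 {X Y : ℝ × ℝ × ℝ} (h : Dom 2 X Y) : Dom 2 (star3 Y) (star3 X) := by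
  rw [dom_iff] at h ⊢
  obtain ⟨h, h1, h2, h3⟩ := h
  simp [coord, star3] at *
  exact ⟨by linarith, by linarith, by linarith⟩

lemma dom_star3 {X Y : ℝ × ℝ × ℝ} (h : Dom 3 X Y) : Dom 1 (star3 Y) (star3 X) := by
  rw [dom_iff] at h ⊢
  obtain ⟨h, h1, h2, h3⟩ := h
  simp [coord, star3] at *
  exact ⟨by linarith, by linarith, by linarith⟩

lemma starMap_mem_G1233 {q} (hq : q ∈ G1123) : starMap q ∈ G1233 := by
  obtain ⟨hA, hB, hC, hD, h1, h2, h3, h4⟩ := hq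
  exact ⟨isDie_star3 hA, isDie_star3 hD, isDie_star3 hC, isDie_star3 hB,
    dom_star3 h4, dom_star2 h3, dom_star1 h2, dom_star1 h1⟩

lemma starMap_mem_G1123 {q} (hq : q ∈ G1233) : starMap q ∈ G1123 := by
  obtain ⟨hA, hB, hC, hD, h1, h2, h3, h4⟩ := hq
  exact ⟨isDie_star3 hA, isDie_star3 hD, isDie_star3 hC, isDie_star3 hB,
    dom_star3 h4, dom_star3 h3, dom_star2 h2, dom_star1 h1⟩

lemma starMap_starMap (q) : starMap (starMap q) = q := by
  obtain ⟨A, B, C, D⟩ := q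
  simp [starMap, star3_star3]

theorem starMap_bijects_G1123_onto_G1233 :
    Set.BijOn starMap G1123 G1233 := by
  have hinv : Set.InvOn starMap starMap G1123 G1233 :=
    ⟨fun q _ => starMap_starMap q, fun q _ => starMap_starMap q⟩
  exact hinv.bijOn (fun q hq => starMap_mem_G1233 hq) (fun q hq => starMap_mem_G1123 hq)
end
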